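/- For all ordinals α and β, ⟨α,β⟩_2 = α · β, where · is standard ordinal multiplication. -/

import Mathlib

open Ordinal

noncomputable def cnfHead (β : Ordinal) : Ordinal := ω ^ Ordinal.log ω β

noncomputable def cnfTail (β : Ordinal) : Ordinal := β - cnfHead β

theorem cnfHead_le {β : Ordinal} (hβ : β ≠ 0) : cnfHead β ≤ β :=
  Ordinal.opow_log_le_self ω hβ

theorem cnfTail_lt {β : Ordinal} (hβ : β ≠ 0) : cnfTail β < β := by
  refine (Ordinal.sub_le_self β _).lt_of_ne fun h => ?_
  have h1 : cnfHead β + β = β := by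
    have h2 := Ordinal.add_sub_cancel_of_le (cnfHead_le hβ)
    rwa [show β - cnfHead β = β from h] at h2
  have h2 : cnfHead β * ω ≤ β := Ordinal.add_eq_right_iff_mul_omega0_le.1 h1
  have h3 : β < ω ^ Order.succ (Ordinal.log ω β) :=
    Ordinal.lt_opow_succ_log_self Ordinal.one_lt_omega0 β
  rw [Ordinal.opow_succ] at h3
  exact (not_le.2 h3) h2

noncomputable def ordOpAux (prev : Ordinal → Ordinal → Ordinal) (z : Ordinal)
    (α : Ordinal) : Ordinal → Ordinal :=
  WellFounded.fix Ordinal.lt_wf fun β IH =>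
    if hβ0 : β = 0 then z
    else if β = 1 then α
    else if hp : cnfHead β = β then
      ⨆ γ : Set.Iio β, IH γ.1 γ.2
    else
      prev (IH (cnfHead β) ((cnfHead_le hβ0).lt_of_ne hp))
           (IH (cnfTail β) (cnfTail_lt hβ0))

noncomputable def ordOp : ℕ → Ordinal → Ordinal → Ordinal
  | 0 => fun _ _ => 0
  | 1 => fun α β => α + β
  | 2 => fun α => ordOpAux (ordOp 1) 0 α
  | (n + 3) => fun α => ordOpAux (ordOp (n + 2)) 1 α

theorem ordOpAux_eq (prev : Ordinal → Ordinal → Ordinal) (z α β : Ordinal) :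
    ordOpAux prev z α β =
      if β = 0 then z
      else if β = 1 then α
      else if cnfHead β = β then ⨆ γ : Set.Iio β, ordOpAux prev z α γ.1
      else prev (ordOpAux prev z α (cnfHead β)) (ordOpAux prev z α (cnfTail β)) := by
  rw [ordOpAux, WellFounded.fix_eq]
  rfl

/-- For all ordinals `α, β`, we have `⟨α, β⟩₂ = α * β`, where `*` is standard ordinal
multiplication. -/
theorem ordOp_two (α β : Ordinal) : ordOp 2 α β = α * β := by
  induction β using Ordinal.induction with
  | h β IH =>
  show ordOpAux (ordOp 1) 0 α β = α * β
  rw [ordOpAux_eq]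
  split_ifs with h0 h1 hp
  · simp [h0]
  · simp [h1]
  · -- limit case
    have hβ1 : 1 < β := lt_of_le_of_ne (Ordinal.one_le_iff_ne_zero.2 h0) (Ne.symm h1)
    have hlog : Ordinal.log ω β ≠ 0 := by
      intro h
      rw [← hp, cnfHead, h, Ordinal.opow_zero] at hβ1
      exact hβ1.false
    have hlim : Order.IsSuccLimit β := by
      rw [← hp, cnfHead]
      exact Ordinal.isSuccLimit_opow_left Ordinal.isSuccLimit_omega0 hlog
    have : ∀ γ : Set.Iio β, ordOpAux (ordOp 1) 0 α γ.1 = α * γ.1 := fun γ => IH γ.1 γ.2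
    rw [iSup_congr this]
    rcases eq_or_ne α 0 with rfl | hα
    · haveI : Nonempty (Set.Iio β) := ⟨⟨0, pos_iff_ne_zero.2 h0⟩⟩
      simp [ciSup_const]
    · exact ((Ordinal.isNormal_mul_right (pos_iff_ne_zero.2 hα)).apply_of_isSuccLimit hlim).symm
  · have hhead : cnfHead β + cnfTail β = β := Ordinal.add_sub_cancel_of_le (cnfHead_le h0)
    have h1 : ordOp 1 (ordOpAux (ordOp 1) 0 α (cnfHead β)) (ordOpAux (ordOp 1) 0 α (cnfTail β))
        = α * cnfHead β + α * cnfTail β := by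
      rw [show ordOpAux (ordOp 1) 0 α (cnfHead β) = ordOp 2 α (cnfHead β) from rfl,
        show ordOpAux (ordOp 1) 0 α (cnfTail β) = ordOp 2 α (cnfTail β) from rfl,
        IH _ ((cnfHead_le h0).lt_of_ne hp), IH _ (cnfTail_lt h0)]
      rfl
    rw [h1, ← mul_add, hhead]
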